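/- Let d₁, d₂, d₃, d₄ ∈ ℂ with d₁d₂d₃d₄(d₁d₄ − d₂d₃)(d₃ − d₄)(d₁ − d₂) ≠ 0. Then diag(d₁,d₂,d₃,d₄) can be written as a product of three 4×4 Toeplitz matrices. -/

import Mathlib

def IsToeplitz {n : ℕ} (M : Matrix (Fin n) (Fin n) ℂ) : Prop :=
  ∀ (i j : Fin n) (hi : (i : ℕ) + 1 < n) (hj : (j : ℕ) + 1 < n),
    M i j = M ⟨i + 1, hi⟩ ⟨j + 1, hj⟩

private lemma ext_fin_four {α : Type*} (M N : Matrix (Fin 4) (Fin 4) α)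
    (h00 : M 0 0 = N 0 0) (h01 : M 0 1 = N 0 1) (h02 : M 0 2 = N 0 2) (h03 : M 0 3 = N 0 3)
    (h10 : M 1 0 = N 1 0) (h11 : M 1 1 = N 1 1) (h12 : M 1 2 = N 1 2) (h13 : M 1 3 = N 1 3)
    (h20 : M 2 0 = N 2 0) (h21 : M 2 1 = N 2 1) (h22 : M 2 2 = N 2 2) (h23 : M 2 3 = N 2 3)
    (h30 : M 3 0 = N 3 0) (h31 : M 3 1 = N 3 1) (h32 : M 3 2 = N 3 2) (h33 : M 3 3 = N 3 3) :
    M = N := by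
  ext i j
  fin_cases i <;> fin_cases j <;> assumption

set_option maxHeartbeats 3200000 in
theorem generic_diag_4x4_product_of_three_toeplitz (d₁ d₂ d₃ d₄ : ℂ)
    (h : d₁ * d₂ * d₃ * d₄ * (d₁ * d₄ - d₂ * d₃) * (d₃ - d₄) * (d₁ - d₂) ≠ 0) :
    ∃ T₁ T₂ T₃ : Matrix (Fin 4) (Fin 4) ℂ,
      IsToeplitz T₁ ∧ IsToeplitz T₂ ∧ IsToeplitz T₃ ∧
      T₁ * T₂ * T₃ = Matrix.diagonal ![d₁, d₂, d₃, d₄] := by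
  have h1 : d₁ ≠ 0 := fun e => h (by rw [e]; ring)
  have h2 : d₂ ≠ 0 := fun e => h (by rw [e]; ring)
  have h3 : d₃ ≠ 0 := fun e => h (by rw [e]; ring)
  have h4 : d₄ ≠ 0 := fun e => h (by rw [e]; ring)
  have h5 : d₁ * d₄ - d₂ * d₃ ≠ 0 := fun e => h (by rw [mul_assoc _ _ (d₁ - d₂), e]; ring)
  have h6 : d₃ - d₄ ≠ 0 := fun e =>
    h (by rw [mul_assoc, mul_comm (d₃ - d₄), ← mul_assoc, mul_assoc, e]; ring)
  have h7 : d₁ - d₂ ≠ 0 := fun e => h (by rw [e]; ring)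
  set c₅ : ℂ := -d₃ * d₄ * (d₁ - d₂) / (d₁ * d₄ - d₂ * d₃) with hc5
  set c₁ : ℂ := (c₅ * d₂ + d₂ * d₄) / d₄ with hc1
  set b₆ : ℂ := -d₃ * (d₁ - d₂) / (d₁ * (d₃ - d₄)) with hb6
  set b₀ : ℂ := d₂ * (d₃ - d₄) / (d₄ * (d₁ - d₂)) with hb0
  set a₆ : ℂ := (d₂ - d₁ - b₆ * d₁) / d₂ with ha6
  set a₀ : ℂ := (d₃ - d₄ + b₀ * d₄) / d₃ with ha0
  refine ⟨!![0,1,0,a₆; 1,0,1,0; 0,1,0,1; a₀,0,1,0],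
    !![0,1,0,b₆; -1,0,1,0; 0,-1,0,1; b₀,0,-1,0],
    !![0,0,c₅,0; 0,0,0,c₅; c₁,0,0,0; 0,c₁,0,0], ?_, ?_, ?_, ?_⟩
  · intro i j hi hj; fin_cases i <;> fin_cases j <;>
      first | rfl | exact absurd hi (by decide) | exact absurd hj (by decide)
  · intro i j hi hj; fin_cases i <;> fin_cases j <;>
      first | rfl | exact absurd hi (by decide) | exact absurd hj (by decide)
  · intro i j hi hj; fin_cases i <;> fin_cases j <;>
      first | rfl | exact absurd hi (by decide) | exact absurd hj (by decide)
  · apply ext_fin_four <;>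
      simp [Matrix.mul_apply, Fin.sum_univ_four, Matrix.diagonal_apply,
        Matrix.vecHead, Matrix.vecTail, -mul_eq_zero] <;>
      simp only [ha6, ha0, hb6, hb0, hc1, hc5] <;>
      field_simp <;> ring_nf <;>
      field_simp [show d₄ * d₁ - d₂ * d₃ ≠ 0 by rw [show d₄ * d₁ - d₂ * d₃ = d₁ * d₄ - d₂ * d₃ by ring]; exact h5,
        show -(d₃ * d₂) + d₁ * d₄ ≠ 0 by rw [show -(d₃ * d₂) + d₁ * d₄ = d₁ * d₄ - d₂ * d₃ by ring]; exact h5,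
        show -(d₃ * d₂) + d₄ * d₁ ≠ 0 by rw [show -(d₃ * d₂) + d₄ * d₁ = d₁ * d₄ - d₂ * d₃ by ring]; exact h5] <;> ring
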